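/- Let h : [0,1] → [0,∞) be a continuous increasing function with h(0) = 0. Then there exists a closed set E ⊂ 𝕋 of positive Lebesgue (arclength) measure which contains no nonempty open arc of 𝕋, such that ∑_{ℓ ∈ 𝒞(E)} h(|ℓ|) < ∞, where 𝒞(E) is the family of maximal open arcs of 𝕋 ∖ E and |ℓ| is the arclength of ℓ. -/

import Mathlib

open MeasureTheory Set

noncomputable section

/-- Arclength measure on the unit circle `𝕋 = {z : ‖z‖ = 1}`, defined as the pushforward of
Lebesgue measure on `(0, 2π]` under the parametrization `θ ↦ exp(iθ)`. -/
def arcMeasure : Measure ℂ :=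
  Measure.map (circleMap 0 1) (volume.restrict (Set.Ioc 0 (2 * Real.pi)))

/-- The family `𝒞(E)` of maximal open arcs complementary to `E` in the unit circle, realized as
the connected components of `𝕋 \ E`. -/
def circleGaps (E : Set ℂ) : Set (Set ℂ) :=
  {ℓ | ∃ z ∈ Metric.sphere (0 : ℂ) 1 \ E,
      ℓ = connectedComponentIn (Metric.sphere (0 : ℂ) 1 \ E) z}

section Aux

open Complex Real

lemma circleMap_eq_circleMap_iff' {x y : ℝ} :
    circleMap 0 1 x = circleMap 0 1 y ↔ ∃ n : ℤ, x = y + n * (2 * π) := by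
  simp only [circleMap, zero_add, ofReal_one, one_mul]
  rw [Complex.exp_eq_exp_iff_exists_int]
  constructor
  · rintro ⟨n, hn⟩
    refine ⟨n, ?_⟩
    have h2 : (x : ℂ) * I = (y + n * (2 * π)) * I := by linear_combination hn
    have := mul_right_cancel₀ I_ne_zero h2
    exact_mod_cast this
  · rintro ⟨n, hn⟩
    exact ⟨n, by push_cast [hn]; ring⟩


lemma preimage_arc_measure_le {a b : ℝ} (hab : a ≤ b) :
    volume (circleMap 0 1 ⁻¹' (circleMap 0 1 '' Icc a b) ∩ Ioc 0 (2 * π)) ≤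
      ENNReal.ofReal (b - a) := by
  set P : ℤ → Set ℝ := fun n => Icc (a + n * (2 * π)) (b + n * (2 * π)) ∩ Ioc 0 (2 * π) with hP
  set Q : ℤ → Set ℝ := fun n => Icc a b ∩ Ioc (0 - n * (2 * π)) (2 * π - n * (2 * π)) with hQ
  have hcover : circleMap 0 1 ⁻¹' (circleMap 0 1 '' Icc a b) ∩ Ioc 0 (2 * π) ⊆ ⋃ n : ℤ, P n := by
    rintro x ⟨hx1, hx2⟩
    obtain ⟨y, hy, hxy⟩ := hx1
    obtain ⟨n, hn⟩ := circleMap_eq_circleMap_iff'.mp hxy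
    refine mem_iUnion.mpr ⟨-n, ⟨⟨?_, ?_⟩, hx2⟩⟩ <;> push_cast
    · linarith [hy.1]
    · linarith [hy.2]
  have hPQ : ∀ n : ℤ, volume (P n) = volume (Q n) := by
    intro n
    have hset : P n = (fun x : ℝ => x + -((n : ℝ) * (2 * π))) ⁻¹' (Q n) := by
      ext x
      simp only [hP, hQ, mem_inter_iff, mem_Icc, mem_Ioc, mem_preimage]
      constructor
      · rintro ⟨⟨h1, h2⟩, h3, h4⟩; exact ⟨⟨by linarith, by linarith⟩, by linarith, by linarith⟩
      · rintro ⟨⟨h1, h2⟩, h3, h4⟩; exact ⟨⟨by linarith, by linarith⟩, by linarith, by linarith⟩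
    rw [hset, measure_preimage_add_right]
  have hdisj : Pairwise (Function.onFun Disjoint Q) := by
    intro n m hnm
    refine Set.disjoint_left.mpr ?_
    rintro x ⟨_, hx1, hx2⟩ ⟨_, hy1, hy2⟩
    refine hnm ?_
    have hpi := Real.pi_pos
    have h2 : ((n : ℝ) - m) * (2 * π) < 2 * π := by linarith
    have h3 : -(2 * π) < ((n : ℝ) - m) * (2 * π) := by linarith
    have habs : |((n - m : ℤ) : ℝ)| < 1 := by
      rw [abs_lt]
      push_cast
      constructor <;> nlinarith
    have : |n - m| < 1 := by exact_mod_cast (by rwa [← Int.cast_abs] at habs : ((|n - m| : ℤ) : ℝ) < 1)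
    have : n - m = 0 := Int.abs_lt_one_iff.mp this
    omega
  have hmeasQ : ∀ n : ℤ, MeasurableSet (Q n) := fun n =>
    measurableSet_Icc.inter measurableSet_Ioc
  calc volume (circleMap 0 1 ⁻¹' (circleMap 0 1 '' Icc a b) ∩ Ioc 0 (2 * π))
      ≤ volume (⋃ n : ℤ, P n) := measure_mono hcover
    _ ≤ ∑' n : ℤ, volume (P n) := measure_iUnion_le _
    _ = ∑' n : ℤ, volume (Q n) := by simp_rw [hPQ]
    _ = volume (⋃ n : ℤ, Q n) := (measure_iUnion hdisj hmeasQ).symm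
    _ ≤ volume (Icc a b) := measure_mono (iUnion_subset fun n => inter_subset_left)
    _ = ENNReal.ofReal (b - a) := Real.volume_Icc

lemma sphere_diff_arc {a b : ℝ} (hab : a < b) (hlen : b - a < 2 * π) :
    Metric.sphere (0 : ℂ) 1 \ circleMap 0 1 '' Ioo a b = circleMap 0 1 '' Icc b (a + 2 * π) := by
  have hpi := Real.pi_pos
  ext z
  constructor
  · rintro ⟨hz1, hz2⟩
    have hrange : z ∈ range (circleMap 0 1) := by
      rw [range_circleMap]; simpa using hz1
    obtain ⟨θ₀, hθ₀⟩ := hrange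
    set k : ℤ := ⌊(θ₀ - b) / (2 * π)⌋ with hk
    set θ : ℝ := θ₀ - k * (2 * π) with hθ
    have h2 : (k : ℝ) ≤ (θ₀ - b) / (2 * π) := Int.floor_le _
    have h3 : (θ₀ - b) / (2 * π) < k + 1 := Int.lt_floor_add_one _
    have hbθ : b ≤ θ := by
      have := (le_div_iff₀ (by positivity)).mp h2
      simp only [hθ]; linarith
    have hθb : θ < b + 2 * π := by
      have := (div_lt_iff₀ (by positivity)).mp h3
      simp only [hθ]; linarith
    have hzθ : circleMap 0 1 θ = z := by
      rw [← hθ₀]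
      exact circleMap_eq_circleMap_iff'.mpr ⟨-k, by push_cast; ring⟩
    by_cases hcase : θ ≤ a + 2 * π
    · exact ⟨θ, ⟨hbθ, hcase⟩, hzθ⟩
    · exfalso
      apply hz2
      refine ⟨θ - 2 * π, ⟨by linarith, by linarith⟩, ?_⟩
      rw [← hzθ]
      exact circleMap_eq_circleMap_iff'.mpr ⟨-1, by push_cast; ring⟩
  · rintro ⟨θ, hθ, rfl⟩
    refine ⟨circleMap_mem_sphere 0 zero_le_one θ, ?_⟩
    rintro ⟨θ', hθ', heq⟩
    obtain ⟨n, hn⟩ := circleMap_eq_circleMap_iff'.mp heq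
    have h1 : 0 < θ - θ' := by linarith [hθ.1, hθ'.2]
    have h2 : θ - θ' < 2 * π := by linarith [hθ.2, hθ'.1]
    have hn' : θ' - θ = n * (2 * π) := by linarith [hn]
    rcases lt_trichotomy n 0 with h | h | h
    · have : (n : ℝ) ≤ -1 := by exact_mod_cast Int.le_sub_one_of_lt h
      nlinarith
    · rw [h] at hn'; push_cast at hn'; linarith
    · have : (1 : ℝ) ≤ n := by exact_mod_cast h
      nlinarith

lemma main_construction (η : ℕ → ℝ) (hη0 : ∀ k, 0 < η k) (hη1 : ∀ k, η k ≤ 1)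
    (hanti : ∀ j k, j ≤ k → η k ≤ η j) :
    ∃ E : Set ℂ, E ⊆ Metric.sphere (0 : ℂ) 1 ∧ IsClosed E ∧
      0 < arcMeasure E ∧
      (∀ a b : ℝ, a < b → ¬ (circleMap 0 1 '' Set.Ioo a b ⊆ E)) ∧
      ∃ m : circleGaps E → ℕ, Function.Injective m ∧
        ∀ ℓ : circleGaps E, (arcMeasure ℓ.1).toReal ≤ η (m ℓ) := by
  classical
  have hpi := Real.pi_pos
  have hpi3 := Real.pi_gt_three
  set c : ℕ → ℝ := TopologicalSpace.denseSeq ℝ with hc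
  set ε : ℕ → ℝ := fun k => η k * (1 / 2) ^ (k + 3) with hε
  have hε_pos : ∀ k, 0 < ε k := fun k =>
    mul_pos (hη0 k) (by positivity)
  have hε_le : ∀ k, ε k ≤ (1 / 2) ^ (k + 3) := fun k => by
    simp only [hε]
    calc η k * (1/2)^(k+3) ≤ 1 * (1/2)^(k+3) := by
          apply mul_le_mul_of_nonneg_right (hη1 k) (by positivity)
      _ = (1/2)^(k+3) := one_mul _
  set A : ℕ → Set ℂ := fun k => circleMap 0 1 '' Ioo (c k - ε k) (c k + ε k) with hA
  set Abar : ℕ → Set ℂ := fun k => circleMap 0 1 '' Icc (c k - ε k) (c k + ε k) with hAbar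
  set U : Set ℂ := ⋃ k, A k with hU
  set E : Set ℂ := Metric.sphere (0 : ℂ) 1 \ U with hE
  -- basic facts
  have hUsub : U ⊆ Metric.sphere (0 : ℂ) 1 := by
    refine iUnion_subset fun k => ?_
    refine (image_subset_range _ _).trans ?_
    rw [range_circleMap]; norm_num
  have hEsub : E ⊆ Metric.sphere (0 : ℂ) 1 := diff_subset
  have hεπ : ∀ k, (c k + ε k) - (c k - ε k) < 2 * π := by
    intro k
    have := hε_le k
    have h8 : ((1:ℝ)/2)^(k+3) ≤ 1/8 := by
      calc ((1:ℝ)/2)^(k+3) ≤ (1/2)^3 := by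
            apply pow_le_pow_of_le_one (by norm_num) (by norm_num) (by omega)
        _ = 1/8 := by norm_num
    nlinarith
  have hEclosed : IsClosed E := by
    have : E = ⋂ k, (Metric.sphere (0 : ℂ) 1 \ A k) := by
      rw [hE, hU, diff_iUnion]
    rw [this]
    refine isClosed_iInter fun k => ?_
    rw [hA, sphere_diff_arc (by linarith [hε_pos k]) (hεπ k)]
    exact (isCompact_Icc.image (continuous_circleMap 0 1)).isClosed
  have hEmeas : MeasurableSet E := hEclosed.measurableSet
  -- measure of closed arcs
  have hAbar_meas : ∀ k, MeasurableSet (Abar k) := fun k =>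
    ((isCompact_Icc.image (continuous_circleMap 0 1)).isClosed).measurableSet
  have hAbar_measure : ∀ k, arcMeasure (Abar k) ≤ ENNReal.ofReal (2 * ε k) := by
    intro k
    rw [arcMeasure, Measure.map_apply (measurable_circleMap 0 1) (hAbar_meas k),
      Measure.restrict_apply ((measurable_circleMap 0 1) (hAbar_meas k))]
    have := preimage_arc_measure_le (a := c k - ε k) (b := c k + ε k) (by linarith [hε_pos k])
    calc volume (circleMap 0 1 ⁻¹' Abar k ∩ Ioc 0 (2 * π))
        ≤ ENNReal.ofReal ((c k + ε k) - (c k - ε k)) := this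
      _ = ENNReal.ofReal (2 * ε k) := by ring_nf
  have hA_measure : ∀ k, arcMeasure (A k) ≤ ENNReal.ofReal (2 * ε k) := by
    intro k
    refine le_trans (measure_mono ?_) (hAbar_measure k)
    exact image_mono Ioo_subset_Icc_self
  -- positivity
  have hWvol : volume (Ioc (0:ℝ) (2*π)) = ENNReal.ofReal (2*π) := by
    rw [Real.volume_Ioc]; norm_num
  have hpre_le : ∀ k, volume (circleMap 0 1 ⁻¹' Abar k ∩ Ioc 0 (2*π)) ≤
      ENNReal.ofReal ((1/2 : ℝ)^(k+2)) := by
    intro k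
    refine le_trans (preimage_arc_measure_le (a := c k - ε k) (b := c k + ε k)
      (by linarith [hε_pos k])) ?_
    apply ENNReal.ofReal_le_ofReal
    have := hε_le k
    have hexp : ((1:ℝ)/2)^(k+3) = (1/2) * (1/2)^(k+2) := by ring
    nlinarith [hε_pos k]
  have hpos : 0 < arcMeasure E := by
    have hEvol : arcMeasure E = volume (circleMap 0 1 ⁻¹' E ∩ Ioc 0 (2*π)) := by
      rw [arcMeasure, Measure.map_apply (measurable_circleMap 0 1) hEmeas,
        Measure.restrict_apply ((measurable_circleMap 0 1) hEmeas)]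
    have hcover : Ioc (0:ℝ) (2*π) ⊆ (circleMap 0 1 ⁻¹' E ∩ Ioc 0 (2*π)) ∪
        ⋃ k, (circleMap 0 1 ⁻¹' Abar k ∩ Ioc 0 (2*π)) := by
      intro θ hθ
      by_cases hmem : circleMap 0 1 θ ∈ U
      · obtain ⟨k, hk⟩ := mem_iUnion.mp hmem
        exact Or.inr (mem_iUnion.mpr ⟨k, ⟨image_mono Ioo_subset_Icc_self hk, hθ⟩⟩)
      · exact Or.inl ⟨⟨circleMap_mem_sphere 0 zero_le_one θ, hmem⟩, hθ⟩
    have hsum : ∑' k : ℕ, volume (circleMap 0 1 ⁻¹' Abar k ∩ Ioc 0 (2*π)) ≤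
        ENNReal.ofReal 1 := by
      calc ∑' k : ℕ, volume (circleMap 0 1 ⁻¹' Abar k ∩ Ioc 0 (2*π))
          ≤ ∑' k : ℕ, ENNReal.ofReal ((1/2 : ℝ)^(k+2)) := ENNReal.tsum_le_tsum hpre_le
        _ = ENNReal.ofReal (∑' k : ℕ, ((1/2 : ℝ)^(k+2))) := by
            rw [ENNReal.ofReal_tsum_of_nonneg (fun k => by positivity)]
            refine (summable_geometric_two.mul_left ((1/2:ℝ)^2)).congr fun k => by ring
        _ ≤ ENNReal.ofReal 1 := by
            apply ENNReal.ofReal_le_ofReal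
            have : ∑' k : ℕ, ((1/2 : ℝ)^(k+2)) = (1/2:ℝ)^2 * ∑' k : ℕ, (1/2:ℝ)^k := by
              rw [← tsum_mul_left]
              exact tsum_congr fun k => by ring
            rw [this, tsum_geometric_two]
            norm_num
    rw [pos_iff_ne_zero]
    intro h0
    rw [hEvol] at h0
    have hle : ENNReal.ofReal (2*π) ≤ ENNReal.ofReal 1 := by
      calc ENNReal.ofReal (2*π) = volume (Ioc (0:ℝ) (2*π)) := hWvol.symm
        _ ≤ volume ((circleMap 0 1 ⁻¹' E ∩ Ioc 0 (2*π)) ∪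
            ⋃ k, (circleMap 0 1 ⁻¹' Abar k ∩ Ioc 0 (2*π))) := measure_mono hcover
        _ ≤ volume (circleMap 0 1 ⁻¹' E ∩ Ioc 0 (2*π)) +
            volume (⋃ k, (circleMap 0 1 ⁻¹' Abar k ∩ Ioc 0 (2*π))) := measure_union_le _ _
        _ ≤ 0 + ∑' k : ℕ, volume (circleMap 0 1 ⁻¹' Abar k ∩ Ioc 0 (2*π)) := by
            rw [h0]; exact add_le_add le_rfl (measure_iUnion_le _)
        _ ≤ ENNReal.ofReal 1 := by rw [zero_add]; exact hsum
    rw [ENNReal.ofReal_le_ofReal_iff (by norm_num)] at hle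
    linarith
  -- no arc
  have hnoarc : ∀ a b : ℝ, a < b → ¬ (circleMap 0 1 '' Set.Ioo a b ⊆ E) := by
    intro a b hab hsub
    obtain ⟨k, hk⟩ := (TopologicalSpace.denseRange_denseSeq ℝ).exists_mem_open
      isOpen_Ioo (nonempty_Ioo.mpr hab)
    have hmem : circleMap 0 1 (c k) ∈ circleMap 0 1 '' Set.Ioo a b :=
      ⟨c k, by rw [hc]; exact hk, rfl⟩
    have hmemA : circleMap 0 1 (c k) ∈ A k :=
      ⟨c k, ⟨by linarith [hε_pos k], by linarith [hε_pos k]⟩, rfl⟩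
    have := hsub hmem
    rw [hE] at this
    exact this.2 (mem_iUnion.mpr ⟨k, hmemA⟩)
  -- gaps
  have hsdE : Metric.sphere (0 : ℂ) 1 \ E = U := diff_diff_cancel_left hUsub
  have hAconn : ∀ k, IsPreconnected (A k) :=
    fun k => (isPreconnected_Ioo).image _ (continuous_circleMap 0 1).continuousOn
  have hAinU : ∀ k, A k ⊆ U := fun k => subset_iUnion A k
  have key : ∀ (z : ℂ), z ∈ U → ∀ k, (A k ∩ connectedComponentIn U z).Nonempty →
      A k ⊆ connectedComponentIn U z := by
    intro z hz k ⟨w, hw1, hw2⟩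
    rw [connectedComponentIn_eq hw2]
    exact (hAconn k).subset_connectedComponentIn hw1 (hAinU k)
  have exists_k : ∀ ℓ : circleGaps E, ∃ k, A k ⊆ ℓ.1 := by
    rintro ⟨ℓ, z, hz, rfl⟩
    simp only [hsdE] at hz ⊢
    obtain ⟨k, hk⟩ := mem_iUnion.mp hz
    exact ⟨k, key z hz k ⟨z, hk, mem_connectedComponentIn hz⟩⟩
  set m : circleGaps E → ℕ := fun ℓ => Nat.find (exists_k ℓ) with hm
  have hmspec : ∀ ℓ : circleGaps E, A (m ℓ) ⊆ ℓ.1 := fun ℓ => Nat.find_spec (exists_k ℓ)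
  have hmmin : ∀ (ℓ : circleGaps E) (j : ℕ), A j ⊆ ℓ.1 → m ℓ ≤ j :=
    fun ℓ j hj => Nat.find_le hj
  have hAne : ∀ k, (A k).Nonempty := fun k =>
    ⟨circleMap 0 1 (c k), c k, ⟨by linarith [hε_pos k], by linarith [hε_pos k]⟩, rfl⟩
  have hinj : Function.Injective m := by
    intro ℓ ℓ' heq
    obtain ⟨w, hw⟩ := hAne (m ℓ)
    have hw1 : w ∈ ℓ.1 := hmspec ℓ hw
    have hw2 : w ∈ ℓ'.1 := hmspec ℓ' (by rw [← heq]; exact hw)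
    apply Subtype.ext
    obtain ⟨z, hz, hzeq⟩ := ℓ.2
    obtain ⟨z', hz', hzeq'⟩ := ℓ'.2
    rw [hzeq] at hw1 ⊢
    rw [hzeq'] at hw2 ⊢
    exact (connectedComponentIn_eq hw1).trans (connectedComponentIn_eq hw2).symm
  have hbound : ∀ ℓ : circleGaps E, arcMeasure ℓ.1 ≤ ENNReal.ofReal (η (m ℓ)) := by
    intro ℓ
    obtain ⟨z, hz, hzeq⟩ := ℓ.2
    simp only [hsdE] at hz
    have hzeq' : ℓ.1 = connectedComponentIn U z := by rw [hzeq]; simp only [hsdE]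
    have hsub2 : ℓ.1 ⊆ ⋃ i : ℕ, A (m ℓ + i) := by
      intro w hw
      have hwU : w ∈ U := by
        have := connectedComponentIn_subset U z
        exact this (hzeq' ▸ hw)
      obtain ⟨j, hj⟩ := mem_iUnion.mp hwU
      have hjsub : A j ⊆ ℓ.1 := by
        rw [hzeq']
        exact key z hz j ⟨w, hj, hzeq' ▸ hw⟩
      have hmj : m ℓ ≤ j := hmmin ℓ j hjsub
      exact mem_iUnion.mpr ⟨j - m ℓ, by rwa [Nat.add_sub_cancel' hmj]⟩
    set M := m ℓ with hM
    have hgsum : Summable fun i : ℕ => (2 * η M * (1/2:ℝ)^(M+3)) * (1/2:ℝ)^i :=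
      summable_geometric_two.mul_left _
    have hdom : ∀ i : ℕ, 2 * ε (M + i) ≤ (2 * η M * (1/2:ℝ)^(M+3)) * (1/2:ℝ)^i := by
      intro i
      have h1 : η (M + i) ≤ η M := hanti M (M + i) (Nat.le_add_right _ _)
      have h2 : ((1:ℝ)/2)^(M+i+3) = (1/2:ℝ)^(M+3) * (1/2:ℝ)^i := by ring
      simp only [hε]
      rw [h2]
      have h3 : (0:ℝ) < (1/2:ℝ)^(M+3) * (1/2:ℝ)^i := by positivity
      nlinarith [hη0 (M+i)]
    have hsummable : Summable fun i : ℕ => 2 * ε (M + i) :=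
      Summable.of_nonneg_of_le (fun i => mul_nonneg (by norm_num) (hε_pos _).le) hdom hgsum
    have htail : ∑' i : ℕ, 2 * ε (M + i) ≤ η M := by
      calc ∑' i : ℕ, 2 * ε (M + i)
          ≤ ∑' i : ℕ, (2 * η M * (1/2:ℝ)^(M+3)) * (1/2:ℝ)^i :=
            Summable.tsum_le_tsum hdom hsummable hgsum
        _ = (2 * η M * (1/2:ℝ)^(M+3)) * 2 := by rw [tsum_mul_left, tsum_geometric_two]
        _ ≤ η M := by
            have h8 : ((1:ℝ)/2)^(M+3) ≤ 1/8 := by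
              calc ((1:ℝ)/2)^(M+3) ≤ (1/2)^3 := by
                    apply pow_le_pow_of_le_one (by norm_num) (by norm_num) (by omega)
                _ = 1/8 := by norm_num
            nlinarith [hη0 M, pow_pos (by norm_num : (0:ℝ) < 1/2) (M+3)]
    calc arcMeasure ℓ.1 ≤ ∑' i : ℕ, arcMeasure (A (M + i)) :=
          le_trans (measure_mono hsub2) (measure_iUnion_le _)
      _ ≤ ∑' i : ℕ, ENNReal.ofReal (2 * ε (M + i)) :=
          ENNReal.tsum_le_tsum (fun i => hA_measure _)
      _ = ENNReal.ofReal (∑' i : ℕ, 2 * ε (M + i)) :=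
          (ENNReal.ofReal_tsum_of_nonneg (fun i => mul_nonneg (by norm_num) (hε_pos _).le)
            hsummable).symm
      _ ≤ ENNReal.ofReal (η M) := ENNReal.ofReal_le_ofReal htail
  refine ⟨E, hEsub, hEclosed, hpos, hnoarc, m, hinj, fun ℓ => ?_⟩
  exact ENNReal.toReal_le_of_le_ofReal (hη0 _).le (hbound ℓ)

end Aux

/-- For any continuous increasing `h : [0,1] → [0,∞)` with `h 0 = 0`, there
is a closed set `E ⊆ 𝕋` of positive arclength measure containing no nonempty open arc which is
an `h`-Beurling–Carleson set: `∑_{ℓ ∈ 𝒞(E)} h(|ℓ|) < ∞`. -/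
theorem statement17 (h : ℝ → ℝ)
    (hcont : ContinuousOn h (Set.Icc 0 1)) (h0 : h 0 = 0)
    (hnonneg : ∀ x ∈ Set.Icc (0 : ℝ) 1, 0 ≤ h x)
    (hmono : MonotoneOn h (Set.Icc 0 1)) :
    ∃ E : Set ℂ, E ⊆ Metric.sphere (0 : ℂ) 1 ∧ IsClosed E ∧
      0 < arcMeasure E ∧
      (∀ a b : ℝ, a < b → ¬ (circleMap 0 1 '' Set.Ioo a b ⊆ E)) ∧
      Summable (fun ℓ : circleGaps E => h ((arcMeasure ℓ.1).toReal)) := by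
  classical
  have hsmall : ∀ k : ℕ, ∃ t : ℝ, 0 < t ∧ t ≤ 1 ∧ h t < (1/2 : ℝ)^k := by
    intro k
    have hc0 : ContinuousWithinAt h (Set.Icc 0 1) 0 :=
      hcont 0 ⟨le_refl 0, zero_le_one⟩
    have htend := hc0.tendsto
    rw [h0] at htend
    have hne : (nhdsWithin (0:ℝ) (Set.Ioc 0 1)).NeBot := by
      rw [← mem_closure_iff_nhdsWithin_neBot, closure_Ioc (one_ne_zero : (1:ℝ) ≠ 0).symm]
      exact ⟨le_refl 0, zero_le_one⟩
    have hmono' : nhdsWithin (0:ℝ) (Set.Ioc 0 1) ≤ nhdsWithin 0 (Set.Icc 0 1) :=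
      nhdsWithin_mono _ Set.Ioc_subset_Icc_self
    have e1 : ∀ᶠ t in nhdsWithin (0:ℝ) (Set.Ioc 0 1), h t < (1/2 : ℝ)^k := by
      have hmem : Set.Iio ((1/2 : ℝ)^k) ∈ nhds (0:ℝ) := Iio_mem_nhds (by positivity)
      exact (htend.mono_left hmono') hmem
    have e2 : ∀ᶠ t in nhdsWithin (0:ℝ) (Set.Ioc 0 1), t ∈ Set.Ioc (0:ℝ) 1 :=
      eventually_mem_nhdsWithin
    obtain ⟨t, ht1, ht2⟩ := (e1.and e2).exists
    exact ⟨t, ht2.1, ht2.2, ht1⟩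
  choose η hη0' hη1' hηlt using hsmall
  let ηm : ℕ → ℝ := fun k => Nat.rec (η 0) (fun n ih => min ih (η (n+1))) k
  have hηm_succ : ∀ n, ηm (n+1) = min (ηm n) (η (n+1)) := fun n => rfl
  have hηm_pos : ∀ k, 0 < ηm k := by
    intro k
    induction k with
    | zero => exact hη0' 0
    | succ n ih => rw [hηm_succ]; exact lt_min ih (hη0' _)
  have hηm_le : ∀ k, ηm k ≤ η k := by
    intro k
    cases k with
    | zero => exact le_refl _
    | succ n => rw [hηm_succ]; exact min_le_right _ _
  have hηm_le1 : ∀ k, ηm k ≤ 1 := fun k => (hηm_le k).trans (hη1' k)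
  have hηm_anti : ∀ j k, j ≤ k → ηm k ≤ ηm j := by
    intro j k hjk
    exact antitone_nat_of_succ_le (fun n => by rw [hηm_succ]; exact min_le_left _ _) hjk
  obtain ⟨E, hE1, hE2, hE3, hE4, m, hinj, hle⟩ :=
    main_construction ηm hηm_pos hηm_le1 hηm_anti
  refine ⟨E, hE1, hE2, hE3, hE4, ?_⟩
  have hIcc : ∀ ℓ : circleGaps E, (arcMeasure ℓ.1).toReal ∈ Set.Icc (0:ℝ) 1 :=
    fun ℓ => ⟨ENNReal.toReal_nonneg, (hle ℓ).trans (hηm_le1 _)⟩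
  refine Summable.of_nonneg_of_le (fun ℓ => hnonneg _ (hIcc ℓ))
    (fun ℓ => ?_) ((summable_geometric_two).comp_injective hinj)
  show h ((arcMeasure ℓ.1).toReal) ≤ (1/2 : ℝ)^(m ℓ)
  have hm1 : ηm (m ℓ) ∈ Set.Icc (0:ℝ) 1 := ⟨(hηm_pos _).le, hηm_le1 _⟩
  have hm2 : η (m ℓ) ∈ Set.Icc (0:ℝ) 1 := ⟨(hη0' _).le, hη1' _⟩
  calc h ((arcMeasure ℓ.1).toReal) ≤ h (ηm (m ℓ)) := hmono (hIcc ℓ) hm1 (hle ℓ)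
    _ ≤ h (η (m ℓ)) := hmono hm1 hm2 (hηm_le _)
    _ ≤ (1/2 : ℝ)^(m ℓ) := (hηlt _).le
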